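/- Under the setup of the previous statement (canonical C = [[I,0],[Q₀,0]], D = [[X₀,−Q₀ᵀ],[0,I]] with X₀ symmetric, σ(r) = κ^{−1/2}(e^{κr}C + e^{−κr}D) invertible at r = 0, U(0) = σ'(0)σ(0)⁻¹, U_∞ = diag(κ'_1,…,κ'_R,−κ''_{R+1},…,−κ''_N), and k complex diagonal with U_∞ − ik invertible), the matrix U(0) is symmetric, and the Jost matrix of the transformed potential, defined as F̃(k) := f̃(0)ᵀ with f̃(r) = (U(r) − ik)e^{ikr}(U_∞ − ik)⁻¹, equals F̃(k) = (U_∞ − ik)⁻¹ (U(0) − ik). -/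

import Mathlib

open Matrix

/-- Paper's Theorem 3 / Proposition 1, formula (53): in the setup of formula (52)
(canonical `C`, `D`, `σ(r)` invertible for `r ≥ 0`, `U_∞ - ik` invertible), the
superpotential at the origin `U(0) = σ'(0)σ(0)⁻¹` is symmetric and the Jost matrix of
the transformed potential, `F̃(k) = f̃(0)ᵀ`, equals `(U_∞ - ik)⁻¹(U(0) - ik)`. -/
theorem prop1_jost_matrix
    (N R : ℕ) (hN : 0 < N) (hR : R ≤ N)
    (κ' : Fin R → ℝ) (κ'' : Fin (N - R) → ℝ)
    (hκ' : ∀ i, 0 < κ' i) (hκ'' : ∀ j, 0 < κ'' j)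
    (Q₀ : Matrix (Fin (N - R)) (Fin R) ℝ)
    (hQ₀ : ∀ (i : Fin R) (j : Fin (N - R)), Q₀ j i = 0 ∨ κ'' j < κ' i)
    (X₀ : Matrix (Fin R) (Fin R) ℝ) (hX₀ : X₀.IsSymm)
    (k : Fin R ⊕ Fin (N - R) → ℂ) (z : ℂ)
    (hk : ∀ i, k i ^ 2 + ((Sum.elim κ' κ'' i : ℝ) : ℂ) ^ 2 = z) :
    let κv : Fin R ⊕ Fin (N - R) → ℝ := Sum.elim κ' κ''
    let C : Matrix (Fin R ⊕ Fin (N - R)) (Fin R ⊕ Fin (N - R)) ℝ :=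
      fromBlocks 1 0 Q₀ 0
    let D : Matrix (Fin R ⊕ Fin (N - R)) (Fin R ⊕ Fin (N - R)) ℝ :=
      fromBlocks X₀ (-Q₀ᵀ) 0 1
    let σ : ℝ → Matrix (Fin R ⊕ Fin (N - R)) (Fin R ⊕ Fin (N - R)) ℝ := fun s =>
      diagonal (fun i => (Real.sqrt (κv i))⁻¹) *
        (diagonal (fun i => Real.exp (κv i * s)) * C +
          diagonal (fun i => Real.exp (-(κv i) * s)) * D)
    let σd : ℝ → Matrix (Fin R ⊕ Fin (N - R)) (Fin R ⊕ Fin (N - R)) ℝ := fun s =>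
      Matrix.of fun i j => deriv (fun t => σ t i j) s
    let U : ℝ → Matrix (Fin R ⊕ Fin (N - R)) (Fin R ⊕ Fin (N - R)) ℝ := fun s =>
      σd s * (σ s)⁻¹
    let Uinf : Matrix (Fin R ⊕ Fin (N - R)) (Fin R ⊕ Fin (N - R)) ℂ :=
      diagonal (Sum.elim (fun i => ((κ' i : ℝ) : ℂ)) fun j => -((κ'' j : ℝ) : ℂ))
    let ik : Matrix (Fin R ⊕ Fin (N - R)) (Fin R ⊕ Fin (N - R)) ℂ :=
      diagonal fun i => Complex.I * k i
    let ft : ℝ → Matrix (Fin R ⊕ Fin (N - R)) (Fin R ⊕ Fin (N - R)) ℂ := fun s =>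
      ((U s).map (fun x => (x : ℂ)) - ik) *
        diagonal (fun i => Complex.exp (Complex.I * k i * s)) * (Uinf - ik)⁻¹
    (∀ r : ℝ, 0 ≤ r → IsUnit (σ r)) →
    IsUnit (Uinf - ik) →
    (U 0).IsSymm ∧
    (ft 0)ᵀ = (Uinf - ik)⁻¹ * ((U 0).map (fun x => (x : ℂ)) - ik) := by

  intro κv C D σ σd U Uinf ik ft hσinv hUik
  have hκpos : ∀ i, 0 < κv i := by
    intro i; cases i with
    | inl i => exact hκ' i
    | inr j => exact hκ'' j
  -- entrywise formula for σ
  have hσentry : ∀ (t : ℝ) i j, σ t i j = (Real.sqrt (κv i))⁻¹ *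
      (Real.exp (κv i * t) * C i j + Real.exp (-(κv i) * t) * D i j) := by
    intro t i j
    simp [σ, Matrix.diagonal_mul, Matrix.add_apply]
  -- σ at 0
  have hσ0 : σ 0 = diagonal (fun i => (Real.sqrt (κv i))⁻¹) * (C + D) := by
    ext i j
    simp [hσentry, Matrix.diagonal_mul, Matrix.add_apply, mul_add]
  -- σd at 0
  have hσd0 : σd 0 = diagonal (fun i => κv i * (Real.sqrt (κv i))⁻¹) * (C - D) := by
    ext i j
    have hd : HasDerivAt (fun t : ℝ => σ t i j)
        ((Real.sqrt (κv i))⁻¹ * ((Real.exp (κv i * 0) * (κv i * 1)) * C i j +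
          (Real.exp (-(κv i) * 0) * (-(κv i) * 1)) * D i j)) 0 := by
      have e1 : HasDerivAt (fun t : ℝ => Real.exp (κv i * t))
          (Real.exp (κv i * 0) * (κv i * 1)) 0 := ((hasDerivAt_id 0).const_mul (κv i)).exp
      have e2 : HasDerivAt (fun t : ℝ => Real.exp (-(κv i) * t))
          (Real.exp (-(κv i) * 0) * (-(κv i) * 1)) 0 :=
        ((hasDerivAt_id 0).const_mul (-(κv i))).exp
      have := ((e1.mul_const (C i j)).add (e2.mul_const (D i j))).const_mul
        ((Real.sqrt (κv i))⁻¹)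
      refine this.congr_of_eventuallyEq ?_
      filter_upwards with t
      rw [hσentry]
      rfl
    have : deriv (fun t : ℝ => σ t i j) 0 =
        (Real.sqrt (κv i))⁻¹ * ((Real.exp (κv i * 0) * (κv i * 1)) * C i j +
          (Real.exp (-(κv i) * 0) * (-(κv i) * 1)) * D i j) := hd.deriv
    simp only [σd, Matrix.of_apply, this, Matrix.diagonal_mul, Matrix.sub_apply]
    simp [mul_comm, mul_sub, mul_add]
    ring
  -- C^T D = D^T C
  have hCD : Cᵀ * D = Dᵀ * C := by
    simp [C, D, Matrix.fromBlocks_transpose, Matrix.fromBlocks_multiply, hX₀.eq]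
  -- key Wronskian identity
  have hval : ∀ i, κv i * (Real.sqrt (κv i))⁻¹ * (Real.sqrt (κv i))⁻¹ = 1 := by
    intro i
    rw [mul_assoc, ← mul_inv, Real.mul_self_sqrt (hκpos i).le,
      mul_inv_cancel₀ (hκpos i).ne']
  have hdiag1 : diagonal (fun i => κv i * (Real.sqrt (κv i))⁻¹) *
      diagonal (fun i => (Real.sqrt (κv i))⁻¹) = (1 : Matrix _ _ ℝ) := by
    rw [Matrix.diagonal_mul_diagonal]
    ext i j
    rcases eq_or_ne i j with rfl | h
    · rw [Matrix.diagonal_apply_eq, Matrix.one_apply_eq]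
      linear_combination hval i
    · simp [Matrix.diagonal_apply_ne _ h, Matrix.one_apply_ne h]
  have hdiag2 : diagonal (fun i => (Real.sqrt (κv i))⁻¹) *
      diagonal (fun i => κv i * (Real.sqrt (κv i))⁻¹) = (1 : Matrix _ _ ℝ) := by
    rw [Matrix.diagonal_mul_diagonal]
    ext i j
    rcases eq_or_ne i j with rfl | h
    · rw [Matrix.diagonal_apply_eq, Matrix.one_apply_eq]
      linear_combination hval i
    · simp [Matrix.diagonal_apply_ne _ h, Matrix.one_apply_ne h]
  have hkey : (σd 0)ᵀ * σ 0 = (σ 0)ᵀ * σd 0 := by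
    rw [hσd0, hσ0, Matrix.transpose_mul, Matrix.transpose_mul,
      Matrix.diagonal_transpose, Matrix.diagonal_transpose,
      mul_assoc, ← mul_assoc (diagonal fun i => κv i * (Real.sqrt (κv i))⁻¹),
      hdiag1, mul_assoc, ← mul_assoc (diagonal fun i => (Real.sqrt (κv i))⁻¹),
      hdiag2, one_mul, one_mul]
    have expand : (C - D)ᵀ * (C + D) - (C + D)ᵀ * (C - D)
        = 2 • (Cᵀ * D) - 2 • (Dᵀ * C) := by
      simp only [Matrix.transpose_sub, Matrix.transpose_add, Matrix.sub_mul,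
        Matrix.add_mul, Matrix.mul_add, Matrix.mul_sub]
      abel
    have h0 : (C - D)ᵀ * (C + D) - (C + D)ᵀ * (C - D) = 0 := by
      rw [expand, hCD]; abel
    linear_combination (norm := abel) h0
  -- symmetry of U 0
  have hA : IsUnit (σ 0) := hσinv 0 le_rfl
  have hAdet : IsUnit (σ 0).det := (Matrix.isUnit_iff_isUnit_det _).mp hA
  have hATdet : IsUnit (σ 0)ᵀ.det := by rwa [Matrix.det_transpose]
  have hsym : (U 0).IsSymm := by
    have h1 : (U 0)ᵀ = ((σ 0)ᵀ)⁻¹ * (σd 0)ᵀ := by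
      simp [U, Matrix.transpose_mul, Matrix.transpose_nonsing_inv]
    rw [Matrix.IsSymm, h1]
    have h2 : (σd 0)ᵀ = (σ 0)ᵀ * (σd 0 * (σ 0)⁻¹) := by
      rw [← mul_assoc, ← hkey, mul_assoc, Matrix.mul_nonsing_inv _ hAdet, mul_one]
    rw [h2, ← mul_assoc, Matrix.nonsing_inv_mul _ hATdet, one_mul]
  refine ⟨hsym, ?_⟩
  -- Jost matrix formula
  have hexp : (diagonal (fun i => Complex.exp (Complex.I * k i * (0:ℝ)))) =
      (1 : Matrix _ _ ℂ) := by
    ext i j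
    rcases eq_or_ne i j with rfl | h
    · simp
    · simp [Matrix.diagonal_apply_ne _ h, Matrix.one_apply_ne h]
  have hft0 : ft 0 = ((U 0).map (fun x => (x : ℂ)) - ik) * (Uinf - ik)⁻¹ := by
    simp only [ft, hexp, mul_one]
  have hdiagUik : (Uinf - ik)ᵀ = Uinf - ik := by
    simp [Uinf, ik, Matrix.transpose_sub, Matrix.diagonal_transpose]
  have hMsym : ((U 0).map (fun x => (x : ℂ)) - ik)ᵀ = (U 0).map (fun x => (x : ℂ)) - ik := by
    rw [Matrix.transpose_sub, ← Matrix.transpose_map, hsym.eq]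
    simp [ik, Matrix.diagonal_transpose]
  rw [hft0, Matrix.transpose_mul, Matrix.transpose_nonsing_inv, hdiagUik, hMsym]
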